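/- For every s ∈ ℝ and every w ∈ ℝ, |w·g_s(w)| ≤ 1. -/

import Mathlib

set_option maxHeartbeats 1000000


open MeasureTheory

noncomputable def Phi (s : ℝ) : ℝ :=
  ((ProbabilityTheory.gaussianReal 0 1) (Set.Iic s)).toReal

noncomputable def steinG (s w : ℝ) : ℝ :=
  Real.exp (w ^ 2 / 2) *
    ∫ u in Set.Iic w, ((if u ≤ s then (1 : ℝ) else 0) - Phi s) * Real.exp (-u ^ 2 / 2)

private lemma gk_integrable : Integrable (fun u : ℝ => Real.exp (-u ^ 2 / 2)) := by
  have h := integrable_exp_neg_mul_sq (b := (1:ℝ)/2) (by norm_num)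
  have he : (fun u : ℝ => Real.exp (-((1:ℝ)/2) * u ^ 2)) = fun u : ℝ => Real.exp (-u ^ 2 / 2) := by
    funext u; congr 1; ring
  rwa [he] at h

private lemma sqrt2pi_pos : (0:ℝ) < Real.sqrt (2 * Real.pi) :=
  Real.sqrt_pos.2 (by positivity)

private lemma gk_total : ∫ u : ℝ, Real.exp (-u ^ 2 / 2) = Real.sqrt (2 * Real.pi) := by
  have h := integral_gaussian ((1:ℝ)/2)
  have he : (fun u : ℝ => Real.exp (-((1:ℝ)/2) * u ^ 2)) = fun u : ℝ => Real.exp (-u ^ 2 / 2) := by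
    funext u; congr 1; ring
  rw [← he]
  rw [h]
  rw [show Real.pi / ((1:ℝ)/2) = 2 * Real.pi by ring]

private lemma Phi_eq (x : ℝ) :
    Phi x = (Real.sqrt (2 * Real.pi))⁻¹ * ∫ u in Set.Iic x, Real.exp (-u ^ 2 / 2) := by
  rw [Phi, ProbabilityTheory.gaussianReal_apply_eq_integral 0 one_ne_zero,
    ENNReal.toReal_ofReal (setIntegral_nonneg measurableSet_Iic fun u _ =>
      ProbabilityTheory.gaussianPDFReal_nonneg 0 1 u)]
  rw [← MeasureTheory.integral_const_mul]
  refine setIntegral_congr_fun measurableSet_Iic fun u _ => ?_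
  simp [ProbabilityTheory.gaussianPDFReal, sub_zero]

private lemma I_eq (x : ℝ) :
    ∫ u in Set.Iic x, Real.exp (-u ^ 2 / 2) = Real.sqrt (2 * Real.pi) * Phi x := by
  rw [Phi_eq, ← mul_assoc, mul_inv_cancel₀ sqrt2pi_pos.ne', one_mul]

private lemma Phi_nonneg (x : ℝ) : 0 ≤ Phi x := ENNReal.toReal_nonneg

private lemma Phi_le_one (x : ℝ) : Phi x ≤ 1 := by
  have h := prob_le_one (μ := ProbabilityTheory.gaussianReal 0 1) (s := Set.Iic x)
  simpa [Phi] using ENNReal.toReal_mono ENNReal.one_ne_top h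

private lemma Phi_mono {x y : ℝ} (h : x ≤ y) : Phi x ≤ Phi y :=
  ENNReal.toReal_mono (measure_ne_top _ _) (measure_mono (Set.Iic_subset_Iic.2 h))

private lemma Phi_neg (x : ℝ) : Phi (-x) = 1 - Phi x := by
  have hrefl : (∫ u in Set.Iic (-x), Real.exp (-u ^ 2 / 2))
      = ∫ u in Set.Ioi x, Real.exp (-u ^ 2 / 2) := by
    have h := integral_comp_neg_Iic (-x) (fun u => Real.exp (-u ^ 2 / 2))
    simp only [neg_neg, neg_sq] at h
    exact h
  have hsum : Phi x + Phi (-x) = 1 := by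
    rw [Phi_eq, Phi_eq, ← mul_add, hrefl,
      intervalIntegral.integral_Iic_add_Ioi gk_integrable.integrableOn gk_integrable.integrableOn, gk_total,
      inv_mul_cancel₀ sqrt2pi_pos.ne']
  linarith

private lemma mill (t : ℝ) (ht : 0 ≤ t) :
    t * ∫ u in Set.Iic (-t), Real.exp (-u ^ 2 / 2) ≤ Real.exp (-t ^ 2 / 2) := by
  have hderiv : ∀ y : ℝ, HasDerivAt (fun u : ℝ => Real.exp (-u ^ 2 / 2))
      (-y * Real.exp (-y ^ 2 / 2)) y := by
    intro y
    have h1 : HasDerivAt (fun u : ℝ => -u ^ 2 / 2) (-y) y := by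
      have h : HasDerivAt (fun u : ℝ => -u ^ 2 / 2) (-((2:ℕ) * y ^ (2 - 1)) / 2) y := ((hasDerivAt_pow 2 y).neg.div_const 2)
      convert h using 1
      push_cast
      ring
    simpa [mul_comm] using h1.exp
  have hint : IntegrableOn (fun u : ℝ => -u * Real.exp (-u ^ 2 / 2)) (Set.Iic (-t)) := by
    have h := (integrable_mul_exp_neg_mul_sq (b := (1:ℝ)/2) (by norm_num)).neg
    have he : ∀ u : ℝ, -(u * Real.exp (-((1:ℝ)/2) * u ^ 2)) = -u * Real.exp (-u ^ 2 / 2) :=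
      fun u => by rw [show -((1:ℝ)/2) * u ^ 2 = -u ^ 2 / 2 from by ring, neg_mul]
    exact (h.congr (Filter.Eventually.of_forall fun u => he u)).integrableOn
  have htend : Filter.Tendsto (fun u : ℝ => Real.exp (-u ^ 2 / 2)) Filter.atBot (nhds 0) := by
    apply Real.tendsto_exp_atBot.comp
    have h2 : Filter.Tendsto (fun u : ℝ => u ^ 2) Filter.atBot Filter.atTop := by
      have h := (Filter.tendsto_pow_atTop (α := ℝ) (n := 2) (by norm_num : (2:ℕ) ≠ 0)).comp
        (Filter.tendsto_neg_atBot_atTop (G := ℝ))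
      exact h.congr fun u => by simp [Function.comp]
    have h3 : Filter.Tendsto (fun u : ℝ => -u ^ 2) Filter.atBot Filter.atBot :=
      Filter.tendsto_neg_atTop_atBot.comp h2
    exact h3.atBot_div_const two_pos
  have key : ∫ u in Set.Iic (-t), -u * Real.exp (-u ^ 2 / 2) = Real.exp (-t ^ 2 / 2) := by
    have h := integral_Iic_of_hasDerivAt_of_tendsto
      (f := fun u : ℝ => Real.exp (-u ^ 2 / 2)) (f' := fun u => -u * Real.exp (-u ^ 2 / 2))
      (a := -t) (m := 0)
      ((hderiv (-t)).continuousAt.continuousWithinAt)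
      (fun x _ => hderiv x) hint htend
    simpa using h
  calc t * ∫ u in Set.Iic (-t), Real.exp (-u ^ 2 / 2)
      = ∫ u in Set.Iic (-t), t * Real.exp (-u ^ 2 / 2) :=
        (MeasureTheory.integral_const_mul _ _).symm
    _ ≤ ∫ u in Set.Iic (-t), -u * Real.exp (-u ^ 2 / 2) := by
        refine setIntegral_mono_on ((gk_integrable.const_mul t).integrableOn) hint
          measurableSet_Iic fun u hu => ?_
        have hu' : u ≤ -t := hu
        exact mul_le_mul_of_nonneg_right (by linarith) (Real.exp_pos _).le
    _ = Real.exp (-t ^ 2 / 2) := key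

private lemma steinG_eq (s w : ℝ) :
    steinG s w = Real.exp (w ^ 2 / 2) *
      (Real.sqrt (2 * Real.pi) * (Phi (min s w) - Phi s * Phi w)) := by
  rw [steinG]
  congr 1
  have h1 : ∀ u : ℝ, ((if u ≤ s then (1:ℝ) else 0) - Phi s) * Real.exp (-u ^ 2 / 2)
      = Set.indicator (Set.Iic s) (fun u => Real.exp (-u ^ 2 / 2)) u
        - Phi s * Real.exp (-u ^ 2 / 2) := by
    intro u
    by_cases h : u ≤ s <;> simp [Set.indicator, h, sub_mul]
  simp_rw [h1]
  rw [integral_sub ((gk_integrable.indicator measurableSet_Iic).integrableOn)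
    ((gk_integrable.const_mul (Phi s)).integrableOn),
    setIntegral_indicator measurableSet_Iic, Set.Iic_inter_Iic,
    MeasureTheory.integral_const_mul]
  rw [show (w ⊓ s) = min s w from min_comm w s, I_eq, I_eq]
  ring

/-- The Stein solution satisfies `|w * g_s w| ≤ 1` for all `s, w ∈ ℝ`. -/
theorem abs_mul_steinG_le_one (s w : ℝ) : |w * steinG s w| ≤ 1 := by
  have hD : |Phi (min s w) - Phi s * Phi w| ≤ Phi w * (1 - Phi w) := by
    rcases le_total s w with h | h
    · rw [min_eq_left h]
      have he : Phi s - Phi s * Phi w = Phi s * (1 - Phi w) := by ring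
      rw [he, abs_of_nonneg (mul_nonneg (Phi_nonneg s) (by linarith [Phi_le_one w]))]
      exact mul_le_mul_of_nonneg_right (Phi_mono h) (by linarith [Phi_le_one w])
    · rw [min_eq_right h]
      have he : Phi w - Phi s * Phi w = Phi w * (1 - Phi s) := by ring
      rw [he, abs_of_nonneg (mul_nonneg (Phi_nonneg w) (by linarith [Phi_le_one s]))]
      have := Phi_mono h
      nlinarith [Phi_nonneg w]
  have hD2 : Phi w * (1 - Phi w) ≤ Phi (-|w|) := by
    rcases le_or_gt 0 w with hw | hw
    · rw [abs_of_nonneg hw, Phi_neg]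
      nlinarith [Phi_nonneg w, Phi_le_one w]
    · rw [abs_of_neg hw, neg_neg]
      nlinarith [Phi_nonneg w, Phi_le_one w]
  have hmill := mill |w| (abs_nonneg w)
  rw [I_eq] at hmill
  have hkey : |w| * (Real.sqrt (2 * Real.pi) * Phi (-|w|)) ≤ Real.exp (-w ^ 2 / 2) := by
    rw [← mul_assoc]
    calc |w| * Real.sqrt (2 * Real.pi) * Phi (-|w|)
        = Real.sqrt (2 * Real.pi) * Phi (-|w|) * |w| := by ring
      _ ≤ Real.exp (-|w| ^ 2 / 2) := by
          rw [mul_comm] at hmill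
          linarith [hmill]
      _ = Real.exp (-w ^ 2 / 2) := by rw [sq_abs]
  rw [steinG_eq, abs_mul, abs_mul, abs_mul,
    abs_of_pos (Real.exp_pos _), abs_of_pos sqrt2pi_pos]
  calc |w| * (Real.exp (w ^ 2 / 2) * (Real.sqrt (2 * Real.pi)
        * |Phi (min s w) - Phi s * Phi w|))
      ≤ |w| * (Real.exp (w ^ 2 / 2) * (Real.sqrt (2 * Real.pi) * Phi (-|w|))) := by
        apply mul_le_mul_of_nonneg_left _ (abs_nonneg w)
        apply mul_le_mul_of_nonneg_left _ (Real.exp_pos _).le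
        exact mul_le_mul_of_nonneg_left (hD.trans hD2) sqrt2pi_pos.le
    _ = Real.exp (w ^ 2 / 2) * (|w| * (Real.sqrt (2 * Real.pi) * Phi (-|w|))) := by ring
    _ ≤ Real.exp (w ^ 2 / 2) * Real.exp (-w ^ 2 / 2) :=
        mul_le_mul_of_nonneg_left hkey (Real.exp_pos _).le
    _ = 1 := by rw [← Real.exp_add]; ring_nf; exact Real.exp_zero
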